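/- Discrete conservation of angular momentum about the gravity axis: under the hypotheses of the discrete angular momentum increment identity (midpoint scheme q¹ k - q⁰ k = h • ((v⁰ k + v¹ k)/2), m k • (v¹ k - v⁰ k) = -h • (w k + ∑ i, (S̄ i * a i k/(l i)²) • (∑ j, a i j • ((q⁰ j + q¹ j)/2)))), assume additionally that the external discrete gradient is constant gravity, w k = -(m k) • b̄ for a fixed vector b̄ : Fin 3 → ℝ and all k. Then the component of the discrete total angular momentum along b̄ is exactly conserved over the step: ⟪∑ k, q¹ k ×₃ (m k • v¹ k), b̄⟫ = ⟪∑ k, q⁰ k ×₃ (m k • v⁰ k), b̄⟫. -/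

import Mathlib

open Matrix

lemma cross_dot_snd (u w : Fin 3 → ℝ) : (u ⨯₃ w) ⬝ᵥ w = 0 := by
  simp [cross_apply, dotProduct, Fin.sum_univ_three]; ring

lemma sum_dotProduct' {ι : Type*} (s : Finset ι) (f : ι → Fin 3 → ℝ)
    (b : Fin 3 → ℝ) : (∑ k ∈ s, f k) ⬝ᵥ b = ∑ k ∈ s, f k ⬝ᵥ b := by
  simp only [dotProduct, Finset.sum_apply, Finset.sum_mul]
  rw [Finset.sum_comm]

/-- Discrete conservation of angular momentum about the gravity
axis: under the hypotheses of the discrete angular momentum increment identity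
(midpoint discrete-gradient scheme), if the external discrete gradient is
constant gravity, `wₖ = -(mₖ) • b̄`, then the component of the discrete total
angular momentum along `b̄` is exactly conserved over the step. -/
theorem discrete_angular_momentum_conservation_gravity (N nel : ℕ) (h : ℝ)
    (m : Fin N → ℝ) (a : Fin nel → Fin N → ℝ)
    (l : Fin nel → ℝ) (hl : ∀ i, l i ≠ 0)
    (Sbar : Fin nel → ℝ) (bbar : Fin 3 → ℝ)
    (q0 q1 v0 v1 : Fin N → (Fin 3 → ℝ))
    (hq : ∀ k : Fin N, q1 k - q0 k = h • ((v0 k + v1 k) / 2))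
    (hv : ∀ k : Fin N, m k • (v1 k - v0 k)
      = -h • ((-(m k) • bbar) + ∑ i, (Sbar i * a i k / (l i) ^ 2)
          • (∑ j, a i j • ((q0 j + q1 j) / 2)))) :
    (∑ k, q1 k ⨯₃ (m k • v1 k)) ⬝ᵥ bbar
      = (∑ k, q0 k ⨯₃ (m k • v0 k)) ⬝ᵥ bbar := by
  set Q : Fin N → Fin 3 → ℝ := fun k => (q0 k + q1 k) / 2 with hQ
  set P : Fin nel → Fin 3 → ℝ := fun i => ∑ j, a i j • Q j with hP
  -- decomposition of the angular momentum increment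
  have hcross : ∀ k, q1 k ⨯₃ (m k • v1 k) - q0 k ⨯₃ (m k • v0 k)
      = (q1 k - q0 k) ⨯₃ (m k • ((v0 k + v1 k) / 2))
        + Q k ⨯₃ (m k • (v1 k - v0 k)) := by
    intro k
    ext i
    fin_cases i <;>
      simp [cross_apply, hQ, Pi.smul_apply, smul_eq_mul] <;> ring
  have main : (∑ k, q1 k ⨯₃ (m k • v1 k)) - (∑ k, q0 k ⨯₃ (m k • v0 k))
      = ∑ k, Q k ⨯₃ (m k • (v1 k - v0 k)) := by
    rw [← Finset.sum_sub_distrib]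
    refine Finset.sum_congr rfl fun k _ => ?_
    rw [hcross k, hq k]
    have h0 : (h • ((v0 k + v1 k) / 2)) ⨯₃ (m k • ((v0 k + v1 k) / 2)) = 0 := by
      ext i; fin_cases i <;> simp [cross_apply] <;> ring
    rw [h0, zero_add]
  -- the internal forces contribute zero total torque
  have hint : (∑ k, Q k ⨯₃ (∑ i, (Sbar i * a i k / (l i) ^ 2) • P i)) = 0 := by
    have step : ∀ k, Q k ⨯₃ (∑ i, (Sbar i * a i k / (l i) ^ 2) • P i)
        = ∑ i, (Sbar i / (l i) ^ 2) • (a i k • (Q k ⨯₃ P i)) := by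
      intro k
      rw [map_sum]
      refine Finset.sum_congr rfl fun i _ => ?_
      rw [LinearMap.map_smul]
      ext j
      simp [smul_eq_mul]
      ring
    simp only [step]
    rw [Finset.sum_comm]
    refine Finset.sum_eq_zero fun i _ => ?_
    rw [← Finset.smul_sum]
    have hPi : P i = ∑ k, a i k • Q k := rfl
    have h3 : ((crossProduct (R := ℝ)).flip (P i)) (∑ k, a i k • Q k)
        = ∑ k, a i k • (Q k ⨯₃ P i) := by
      rw [map_sum]
      exact Finset.sum_congr rfl fun k _ => by
        rw [LinearMap.map_smul]; rfl
    rw [← h3, ← hPi, LinearMap.flip_apply, cross_self, smul_zero]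
  -- dot the increment with bbar
  have hdot : (∑ k, Q k ⨯₃ (m k • (v1 k - v0 k))) ⬝ᵥ bbar = 0 := by
    have step : ∀ k, Q k ⨯₃ (m k • (v1 k - v0 k))
        = (-h * -(m k)) • (Q k ⨯₃ bbar)
          + (-h) • (Q k ⨯₃ (∑ i, (Sbar i * a i k / (l i) ^ 2) • P i)) := by
      intro k
      rw [hv k]
      simp only [hQ, hP]
      rw [LinearMap.map_smul, map_add, LinearMap.map_smul]
      ext j
      simp [smul_eq_mul]
      ring
    simp only [step]
    rw [Finset.sum_add_distrib, add_dotProduct]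
    have h1 : (∑ k, (-h * -(m k)) • (Q k ⨯₃ bbar)) ⬝ᵥ bbar = 0 := by
      rw [sum_dotProduct']
      refine Finset.sum_eq_zero fun k _ => ?_
      rw [smul_dotProduct, cross_dot_snd, smul_zero]
    have h2 : (∑ k, (-h) • (Q k ⨯₃ (∑ i, (Sbar i * a i k / (l i) ^ 2) • P i)))
        ⬝ᵥ bbar = 0 := by
      rw [← Finset.smul_sum, hint, smul_zero, zero_dotProduct]
    rw [h1, h2, add_zero]
  have := congrArg (fun v => v ⬝ᵥ bbar) main
  simp only [sub_dotProduct] at this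
  rw [hdot] at this
  linarith
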